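/- Let n > 1 and let I_{2n} = {−n, −n+1, …, n−1}. Let Φ be the Feigin–Tsygan isomorphism gJ(R) → gl_{I_{2n}}(J(R)) determined by Φ(E_{m+2rn, m'+2sn}(a)) = e_{m,m'}(E_{r,s}(a)) for m,m' ∈ I_{2n}, r,s ∈ ℤ, a ∈ R. Define o_J^{even}(R) = {X ∈ gJ(R) : τ_{−1}^s(X) = −X}, where τ_{−1}^s(X) = J_{−1}^s ᵗ(X) J_{−1}^s with J_{−1}^s = Σ_{i∈ℤ} E_{i,−1−i}, and define o_{2n}(J(R)) = {X ∈ gl_{I_{2n}}(J(R)) : X^† J_n^D + J_n^D X = 0}, where J_n^D = Σ_{i=−n}^{n−1} e_{i,−i−1} and X^† is the transpose of X with the anti-involution ∗ of J(R) (E_{k,l}(r)^∗ = E_{−l,−k}(r̄)) applied to each entry. Then Φ restricts to an isomorphism of Lie algebras o_J^{even}(R) → o_{2n}(J(R)). -/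

import Mathlib

/-!
STATEMENT 8: The Feigin–Tsygan isomorphism `Φ : gJ(R) → gl_{I_{2n}}(J(R))`,
`I_{2n} = {−n,…,n−1}`, `Φ(E_{m+2rn, m'+2sn}(a)) = e_{m,m'}(E_{r,s}(a))`,
restricts to an isomorphism of Lie algebras
`o_J^{even}(R) = {X : τ_{−1}^s(X) = −X} → o_{2n}(J(R)) = {A : A^† J_n^D + J_n^D A = 0}`.
-/

def HasBand {R : Type*} [Zero R] (A : ℤ → ℤ → R) (N : ℤ) : Prop :=
  ∀ i j : ℤ, N < |i - j| → A i j = 0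

def IsJacobi {R : Type*} [Zero R] (A : ℤ → ℤ → R) : Prop := ∃ N : ℤ, HasBand A N

noncomputable def jmul {R : Type*} [Ring R] (A B : ℤ → ℤ → R) : ℤ → ℤ → R :=
  fun i j => ∑ᶠ l : ℤ, A i l * B l j

noncomputable def lieB {R : Type*} [Ring R] (A B : ℤ → ℤ → R) : ℤ → ℤ → R :=
  jmul A B - jmul B A

def idMat {R : Type*} [Ring R] : ℤ → ℤ → R := fun i j => if i = j then 1 else 0

/-- `τ_{−1}^s(X) = J_{−1}^s ᵗ(X) J_{−1}^s` where `J_{−1}^s = Σ_i E_{i,−1−i}`;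
entrywise `τ_{−1}^s(X)_{i,j} = bar (X_{−1−j,−1−i})`. -/
def tauD {R : Type*} (bar : R → R) (X : ℤ → ℤ → R) : ℤ → ℤ → R :=
  fun i j => bar (X (-1 - j) (-1 - i))

/-- The anti-involution `∗` of `J(R)`: `E_{k,l}(r)^∗ = E_{−l,−k}(r̄)`. -/
def astar {R : Type*} (bar : R → R) (X : ℤ → ℤ → R) : ℤ → ℤ → R :=
  fun i j => bar (X (-j) (-i))

/-- The index set `I_{2n} = {−n, …, n−1}`. -/
noncomputable def Iev (n : ℕ) : Finset ℤ := Finset.Icc (-(n : ℤ)) ((n : ℤ) - 1)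

/-- The restriction of the Feigin–Tsygan isomorphism:
`Φ(X)_{m,m'} (r,s) = X(m + 2rn, m' + 2sn)`. -/
def PhiEv {R : Type*} (n : ℕ) (X : ℤ → ℤ → R) :
    {i : ℤ // i ∈ Iev n} → {i : ℤ // i ∈ Iev n} → ℤ → ℤ → R :=
  fun m m' r s => X ((m : ℤ) + r * (2 * n)) ((m' : ℤ) + s * (2 * n))

/-- Multiplication of matrices indexed by `I_{2n}` with entries in `J(R)`. -/
noncomputable def matMulEv {R : Type*} [Ring R] (n : ℕ)
    (A B : {i : ℤ // i ∈ Iev n} → {i : ℤ // i ∈ Iev n} → ℤ → ℤ → R) :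
    {i : ℤ // i ∈ Iev n} → {i : ℤ // i ∈ Iev n} → ℤ → ℤ → R :=
  fun m m' => ∑ p : {i : ℤ // i ∈ Iev n}, jmul (A m p) (B p m')

/-- `A^†`: transpose with `∗` applied to each entry. -/
def daggerEv {R : Type*} (bar : R → R) (n : ℕ)
    (A : {i : ℤ // i ∈ Iev n} → {i : ℤ // i ∈ Iev n} → ℤ → ℤ → R) :
    {i : ℤ // i ∈ Iev n} → {i : ℤ // i ∈ Iev n} → ℤ → ℤ → R :=
  fun m m' => astar bar (A m' m)

/-- `J_n^D = Σ_{i=−n}^{n−1} e_{i,−i−1}` (entries in `J(R)`). -/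
def JnD {R : Type*} [Ring R] (n : ℕ) :
    {i : ℤ // i ∈ Iev n} → {i : ℤ // i ∈ Iev n} → ℤ → ℤ → R :=
  fun m m' => if (m' : ℤ) = -(m : ℤ) - 1 then idMat else 0

open Function

section Aux
variable {R : Type*} [Ring R]

lemma Iev_mem_iff {n : ℕ} {m : ℤ} : m ∈ Iev n ↔ -(n:ℤ) ≤ m ∧ m ≤ (n:ℤ) - 1 := by
  simp [Iev, Finset.mem_Icc]

lemma Iev_neg {n : ℕ} {m : ℤ} (hm : m ∈ Iev n) : -m - 1 ∈ Iev n := by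
  rw [Iev_mem_iff] at hm ⊢; omega

/-- residue in `[-n, n-1]` -/
def md (n : ℕ) (t : ℤ) : ℤ := (t + n) % (2*n) - n
/-- quotient -/
def qd (n : ℕ) (t : ℤ) : ℤ := (t + n) / (2*n)

lemma md_mem {n : ℕ} (hn : 0 < n) (t : ℤ) : md n t ∈ Iev n := by
  have h0 : (0:ℤ) < 2*n := by positivity
  have h1 := Int.emod_nonneg (t + n) (ne_of_gt h0)
  have h2 := Int.emod_lt_of_pos (t + n) h0
  rw [Iev_mem_iff]; unfold md; omega

lemma md_add_qd {n : ℕ} (t : ℤ) : md n t + qd n t * (2*n) = t := by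
  have h := Int.emod_add_mul_ediv (t + n) (2*n)
  have h2 : (qd n t) * (2*(n:ℤ)) = 2*n * ((t + n) / (2*n)) := mul_comm _ _
  unfold md qd at *; linarith

lemma decomp_unique {n : ℕ} (hn : 0 < n) {m m' r r' : ℤ} (hm : m ∈ Iev n) (hm' : m' ∈ Iev n)
    (h : m + r * (2*n) = m' + r' * (2*n)) : m = m' ∧ r = r' := by
  rw [Iev_mem_iff] at hm hm'
  have hn' : (0:ℤ) < 2*n := by positivity
  have hdvd : (2*(n:ℤ)) ∣ (m' - m) := ⟨r - r', by linarith⟩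
  have habs : |m' - m| < 2*(n:ℤ) := abs_lt.mpr ⟨by omega, by omega⟩
  have hmm : m' - m = 0 := Int.eq_zero_of_abs_lt_dvd hdvd habs
  refine ⟨by omega, ?_⟩
  have h3 : r * (2*(n:ℤ)) = r' * (2*n) := by omega
  exact mul_right_cancel₀ (ne_of_gt hn') h3

lemma md_eq {n : ℕ} (hn : 0 < n) {m r t : ℤ} (hm : m ∈ Iev n) (ht : m + r * (2*n) = t) :
    md n t = m ∧ qd n t = r :=
  have := decomp_unique hn (md_mem hn t) hm ((md_add_qd t).trans ht.symm)
  ⟨this.1, this.2⟩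

/-- splitting a finsum over `ℤ` along residues mod `2n` -/
lemma finsum_split {n : ℕ} (hn : 0 < n) (f : ℤ → R) (hf : (support f).Finite) :
    ∑ᶠ t : ℤ, f t = ∑ p : {i : ℤ // i ∈ Iev n}, ∑ᶠ l : ℤ, f ((p:ℤ) + l * (2*n)) := by
  set e : {i : ℤ // i ∈ Iev n} × ℤ → ℤ := fun q => (q.1 : ℤ) + q.2 * (2*n) with he
  have hbij : Function.Bijective e := by
    constructor
    · rintro ⟨p, l⟩ ⟨p', l'⟩ hq
      have := decomp_unique hn p.2 p'.2 hq
      exact Prod.ext (Subtype.ext this.1) this.2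
    · intro t
      exact ⟨⟨⟨md n t, md_mem hn t⟩, qd n t⟩, md_add_qd t⟩
  have h1 : ∑ᶠ q : {i : ℤ // i ∈ Iev n} × ℤ, f (e q) = ∑ᶠ t : ℤ, f t :=
    finsum_comp e hbij
  have hsupp : (support (fun q => f (e q))).Finite := by
    refine Set.Finite.subset (hf.preimage (hbij.injective.injOn)) ?_
    intro q hq; exact hq
  rw [← h1, finsum_curry _ hsupp, finsum_eq_sum_of_fintype]

end Aux
section Aux2
variable {R : Type*} [Ring R]

lemma support_band {X Y : ℤ → ℤ → R} (hX : IsJacobi X) (i j : ℤ) :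
    (Function.support (fun t => X i t * Y t j)).Finite := by
  obtain ⟨N, hN⟩ := hX
  refine Set.Finite.subset (Set.finite_Icc (i - |N|) (i + |N|)) ?_
  intro t ht
  simp only [Function.mem_support] at ht
  by_contra hc
  simp only [Set.mem_Icc, not_and_or, not_le] at hc
  have hX0 : X i t = 0 := by
    apply hN
    have h1 := le_abs_self (i - t)
    have h2 := neg_le_abs (i - t)
    have h3 := le_abs_self N
    rcases hc with hc | hc <;> linarith
  rw [hX0, zero_mul] at ht; exact ht rfl

lemma jmul_idMat (A : ℤ → ℤ → R) : jmul A idMat = A := by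
  funext i j
  show (∑ᶠ l : ℤ, A i l * (if l = j then 1 else 0)) = A i j
  rw [finsum_eq_single _ j (fun l hl => by rw [if_neg hl, mul_zero])]
  rw [if_pos rfl, mul_one]

lemma idMat_jmul (A : ℤ → ℤ → R) : jmul idMat A = A := by
  funext i j
  show (∑ᶠ l : ℤ, (if i = l then 1 else 0) * A l j) = A i j
  rw [finsum_eq_single _ i (fun l hl => by rw [if_neg (fun h => hl h.symm), zero_mul])]
  rw [if_pos rfl, one_mul]

lemma jmul_zero (A : ℤ → ℤ → R) : jmul A (0 : ℤ → ℤ → R) = 0 := by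
  funext i j
  show (∑ᶠ l : ℤ, A i l * (0:R)) = 0
  simp

lemma zero_jmul (A : ℤ → ℤ → R) : jmul (0 : ℤ → ℤ → R) A = 0 := by
  funext i j
  show (∑ᶠ l : ℤ, (0:R) * A l j) = 0
  simp

lemma matMul_JnD {n : ℕ} (A : {i : ℤ // i ∈ Iev n} → {i : ℤ // i ∈ Iev n} → ℤ → ℤ → R)
    (m m' : {i : ℤ // i ∈ Iev n}) :
    matMulEv n A (JnD n) m m' = A m ⟨-(m':ℤ) - 1, Iev_neg m'.2⟩ := by
  unfold matMulEv JnD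
  rw [Finset.sum_eq_single (⟨-(m':ℤ) - 1, Iev_neg m'.2⟩ : {i : ℤ // i ∈ Iev n})]
  · rw [if_pos (by push_cast; ring), jmul_idMat]
  · intro p _ hp
    rw [if_neg (fun h => hp (Subtype.ext (show (p:ℤ) = -(m':ℤ) - 1 by omega))), jmul_zero]
  · intro h; exact absurd (Finset.mem_univ _) h

lemma JnD_matMul {n : ℕ} (A : {i : ℤ // i ∈ Iev n} → {i : ℤ // i ∈ Iev n} → ℤ → ℤ → R)
    (m m' : {i : ℤ // i ∈ Iev n}) :
    matMulEv n (JnD n) A m m' = A ⟨-(m:ℤ) - 1, Iev_neg m.2⟩ m' := by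
  unfold matMulEv JnD
  rw [Finset.sum_eq_single (⟨-(m:ℤ) - 1, Iev_neg m.2⟩ : {i : ℤ // i ∈ Iev n})]
  · rw [if_pos (by push_cast; ring), idMat_jmul]
  · intro p _ hp
    rw [if_neg (fun h => hp (Subtype.ext (show (p:ℤ) = -(m:ℤ) - 1 by omega))), zero_jmul]
  · intro h; exact absurd (Finset.mem_univ _) h

end Aux2
section Aux3
variable {R : Type*} [Ring R]

lemma cond_iff {n : ℕ} (bar : R → R)
    (A : {i : ℤ // i ∈ Iev n} → {i : ℤ // i ∈ Iev n} → ℤ → ℤ → R) :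
    (matMulEv n (daggerEv bar n A) (JnD n) + matMulEv n (JnD n) A = 0) ↔
    ∀ (m m' : {i : ℤ // i ∈ Iev n}) (i j : ℤ),
      bar (A ⟨-(m':ℤ) - 1, Iev_neg m'.2⟩ m (-j) (-i)) + A ⟨-(m:ℤ) - 1, Iev_neg m.2⟩ m' i j = 0 := by
  have key : ∀ (m m' : {i : ℤ // i ∈ Iev n}) (i j : ℤ),
      (matMulEv n (daggerEv bar n A) (JnD n) + matMulEv n (JnD n) A) m m' i j =
      bar (A ⟨-(m':ℤ) - 1, Iev_neg m'.2⟩ m (-j) (-i)) + A ⟨-(m:ℤ) - 1, Iev_neg m.2⟩ m' i j := by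
    intro m m' i j
    have : (matMulEv n (daggerEv bar n A) (JnD n) + matMulEv n (JnD n) A) m m' i j =
        matMulEv n (daggerEv bar n A) (JnD n) m m' i j + matMulEv n (JnD n) A m m' i j := rfl
    rw [this, matMul_JnD, JnD_matMul]
    rfl
  constructor
  · intro h m m' i j
    rw [← key, h]; rfl
  · intro h
    funext m m' i j
    show (matMulEv n (daggerEv bar n A) (JnD n) + matMulEv n (JnD n) A) m m' i j = (0:R)
    rw [key]; exact h m m' i j

lemma phi_band {n : ℕ} (hn : 0 < n) {X : ℤ → ℤ → R} (hX : IsJacobi X)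
    (m m' : {i : ℤ // i ∈ Iev n}) : IsJacobi (PhiEv n X m m') := by
  obtain ⟨N, hN⟩ := hX
  refine ⟨|N|, fun r s h => ?_⟩
  apply hN
  have hm := Iev_mem_iff.mp m.2
  have hm' := Iev_mem_iff.mp m'.2
  have hc : (1:ℤ) ≤ 2*n := by omega
  have habs : |N| + 1 ≤ |r - s| := h
  have key : (|N| + 1) * (2*(n:ℤ)) ≤ |r - s| * (2*n) :=
    mul_le_mul_of_nonneg_right habs (by positivity)
  have habs2 : |(r - s) * (2*(n:ℤ))| = |r - s| * (2*n) := by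
    rw [abs_mul, abs_of_nonneg (by positivity : (0:ℤ) ≤ 2*n)]
  have hsub := abs_sub_abs_le_abs_sub ((r - s) * (2*(n:ℤ))) (-((m:ℤ) - m'))
  rw [abs_neg, show (r - s) * (2*(n:ℤ)) - -((m:ℤ) - m') =
      ((m:ℤ) + r * (2*n)) - ((m':ℤ) + s * (2*n)) by ring] at hsub
  have hmm' : |(m:ℤ) - m'| ≤ 2*(n:ℤ) - 1 := abs_le.mpr ⟨by omega, by omega⟩
  have hNle : N ≤ |N| := le_abs_self N
  have e : (|N| + 1) * (2*(n:ℤ)) = |N| * (2*n) + 2*n := by ring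
  have hge : |N| ≤ |N| * (2*(n:ℤ)) := le_mul_of_one_le_right (abs_nonneg N) hc
  linarith

end Aux3
section Aux4
variable {R : Type*} [Ring R]

lemma matMul_phi {n : ℕ} (hn : 0 < n) {X : ℤ → ℤ → R} (hX : IsJacobi X) (Y : ℤ → ℤ → R)
    (m m' : {i : ℤ // i ∈ Iev n}) (r s : ℤ) :
    matMulEv n (PhiEv n X) (PhiEv n Y) m m' r s =
      jmul X Y ((m:ℤ) + r * (2*n)) ((m':ℤ) + s * (2*n)) := by
  have h := finsum_split hn
    (fun t => X ((m:ℤ) + r * (2*n)) t * Y t ((m':ℤ) + s * (2*n)))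
    (support_band hX _ _)
  simp only [matMulEv, Finset.sum_apply]
  exact h.symm
end Aux4
theorem statement8 (k R : Type*) [Field k] [CharZero k] [Ring R] [Algebra k R]
    (bar : R →ₗ[k] R) (hbar_mul : ∀ r s : R, bar (r * s) = bar s * bar r)
    (hbar_inv : ∀ r : R, bar (bar r) = r) (n : ℕ) (hn : 1 < n) :
    -- well-definedness: entries of `Φ(X)` lie in `J(R)`
    (∀ X : ℤ → ℤ → R, IsJacobi X →
      ∀ m m' : {i : ℤ // i ∈ Iev n}, IsJacobi (PhiEv n X m m')) ∧
    -- `Φ` maps `o_J^{even}(R)` exactly onto `o_{2n}(J(R))`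
    (∀ X : ℤ → ℤ → R, IsJacobi X →
      (tauD (⇑bar) X = -X ↔
        matMulEv n (daggerEv (⇑bar) n (PhiEv n X)) (JnD n) +
          matMulEv n (JnD n) (PhiEv n X) = 0)) ∧
    -- `Φ` is a homomorphism of Lie algebras
    (∀ X Y : ℤ → ℤ → R, IsJacobi X → IsJacobi Y →
      PhiEv n (lieB X Y) =
        matMulEv n (PhiEv n X) (PhiEv n Y) - matMulEv n (PhiEv n Y) (PhiEv n X)) ∧
    -- injectivity on `o_J^{even}(R)`
    (∀ X Y : ℤ → ℤ → R, IsJacobi X → IsJacobi Y → tauD (⇑bar) X = -X →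
      tauD (⇑bar) Y = -Y → PhiEv n X = PhiEv n Y → X = Y) ∧
    -- surjectivity onto `o_{2n}(J(R))`
    (∀ A : {i : ℤ // i ∈ Iev n} → {i : ℤ // i ∈ Iev n} → ℤ → ℤ → R,
      (∀ m m', IsJacobi (A m m')) →
      matMulEv n (daggerEv (⇑bar) n A) (JnD n) + matMulEv n (JnD n) A = 0 →
      ∃ X : ℤ → ℤ → R, IsJacobi X ∧ tauD (⇑bar) X = -X ∧ PhiEv n X = A) := by
  have hn0 : 0 < n := by omega
  refine ⟨fun X hX m m' => phi_band hn0 hX m m', ?_, ?_, ?_, ?_⟩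
  · -- part 2
    intro X _
    rw [cond_iff (⇑bar) (PhiEv n X)]
    constructor
    · intro htau m m' i j
      have htau' : ∀ i j : ℤ, bar (X (-1 - j) (-1 - i)) = -(X i j) := fun i j =>
        congrFun (congrFun htau i) j
      show bar (X ((-(m':ℤ) - 1) + (-j) * (2*n)) ((m:ℤ) + (-i) * (2*n))) +
          X ((-(m:ℤ) - 1) + i * (2*n)) ((m':ℤ) + j * (2*n)) = 0
      rw [show (-(m':ℤ) - 1) + (-j) * (2*n) = -1 - ((m':ℤ) + j * (2*n)) by ring,
          show ((m:ℤ)) + (-i) * (2*n) = -1 - ((-(m:ℤ) - 1) + i * (2*n)) by ring,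
          htau']
      exact neg_add_cancel _
    · intro hmat
      funext i j
      show bar (X (-1 - j) (-1 - i)) = -(X i j)
      have hi := md_add_qd (n := n) i
      have hj := md_add_qd (n := n) j
      have hc := hmat ⟨-(md n i) - 1, Iev_neg (md_mem hn0 i)⟩ ⟨md n j, md_mem hn0 j⟩
        (qd n i) (qd n j)
      -- hc : bar (PhiEv ...) + PhiEv ... = 0
      have hc2 : bar (X ((-(md n j) - 1) + (-(qd n j)) * (2*n))
            ((-(md n i) - 1) + (-(qd n i)) * (2*n))) +
          X ((-(-(md n i) - 1) - 1) + (qd n i) * (2*n)) ((md n j) + (qd n j) * (2*n)) = 0 := hc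
      rw [show (-(md n j) - 1) + (-(qd n j)) * (2*(n:ℤ)) = -1 - j by linear_combination -hj,
          show (-(md n i) - 1) + (-(qd n i)) * (2*(n:ℤ)) = -1 - i by linear_combination -hi,
          show (-(-(md n i) - 1) - 1) + (qd n i) * (2*(n:ℤ)) = i by linear_combination hi,
          show (md n j) + (qd n j) * (2*(n:ℤ)) = j by linear_combination hj] at hc2
      exact eq_neg_of_add_eq_zero_left hc2
  · -- part 3: homomorphism
    intro X Y hX hY
    funext m m' r s
    show jmul X Y ((m:ℤ) + r * (2*n)) ((m':ℤ) + s * (2*n)) -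
        jmul Y X ((m:ℤ) + r * (2*n)) ((m':ℤ) + s * (2*n)) =
        matMulEv n (PhiEv n X) (PhiEv n Y) m m' r s -
        matMulEv n (PhiEv n Y) (PhiEv n X) m m' r s
    rw [matMul_phi hn0 hX Y m m' r s, matMul_phi hn0 hY X m m' r s]
  · -- part 4: injectivity
    intro X Y _ _ _ _ h
    funext i j
    have hi := md_add_qd (n := n) i
    have hj := md_add_qd (n := n) j
    have h2 : X ((md n i) + (qd n i) * (2*n)) ((md n j) + (qd n j) * (2*n)) =
        Y ((md n i) + (qd n i) * (2*n)) ((md n j) + (qd n j) * (2*n)) :=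
      congrFun (congrFun (congrFun (congrFun h ⟨md n i, md_mem hn0 i⟩)
        ⟨md n j, md_mem hn0 j⟩) (qd n i)) (qd n j)
    rw [hi, hj] at h2
    exact h2
  · -- part 5: surjectivity
    intro A hA hcond
    rw [cond_iff (⇑bar) A] at hcond
    choose Nf hNf using hA
    set X : ℤ → ℤ → R := fun i j =>
      A ⟨md n i, md_mem hn0 i⟩ ⟨md n j, md_mem hn0 j⟩ (qd n i) (qd n j) with hXdef
    have hPhi : PhiEv n X = A := by
      funext m m' r s
      have h1 := md_eq hn0 m.2 (rfl : (m:ℤ) + r * (2*n) = (m:ℤ) + r * (2*n))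
      have h2 := md_eq hn0 m'.2 (rfl : (m':ℤ) + s * (2*n) = (m':ℤ) + s * (2*n))
      show A ⟨md n ((m:ℤ) + r * (2*n)), md_mem hn0 _⟩ ⟨md n ((m':ℤ) + s * (2*n)), md_mem hn0 _⟩
          (qd n ((m:ℤ) + r * (2*n))) (qd n ((m':ℤ) + s * (2*n))) = A m m' r s
      rw [show (⟨md n ((m:ℤ) + r * (2*n)), md_mem hn0 _⟩ : {i : ℤ // i ∈ Iev n}) = m from
            Subtype.ext h1.1,
          show (⟨md n ((m':ℤ) + s * (2*n)), md_mem hn0 _⟩ : {i : ℤ // i ∈ Iev n}) = m' from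
            Subtype.ext h2.1, h1.2, h2.2]
    refine ⟨X, ?_, ?_, hPhi⟩
    · -- IsJacobi X
      set N0 : ℕ := Finset.sup Finset.univ
        (fun q : {i : ℤ // i ∈ Iev n} × {i : ℤ // i ∈ Iev n} => (Nf q.1 q.2).natAbs) with hN0
      refine ⟨2*n*(N0+1), fun i j hij => ?_⟩
      by_contra hne
      -- X i j ≠ 0 so |qd i - qd j| ≤ Nf ≤ N0
      have hq : ¬ ((Nf ⟨md n i, md_mem hn0 i⟩ ⟨md n j, md_mem hn0 j⟩) < |qd n i - qd n j|) :=
        fun hlt => hne (hNf _ _ _ _ hlt)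
      push_neg at hq
      have hsup : ((Nf ⟨md n i, md_mem hn0 i⟩ ⟨md n j, md_mem hn0 j⟩).natAbs : ℤ) ≤ (N0 : ℤ) := by
        exact_mod_cast Finset.le_sup (f := fun q : {i : ℤ // i ∈ Iev n} × {i : ℤ // i ∈ Iev n} =>
          (Nf q.1 q.2).natAbs) (Finset.mem_univ (⟨md n i, md_mem hn0 i⟩, ⟨md n j, md_mem hn0 j⟩))
      have hle : |qd n i - qd n j| ≤ (N0 : ℤ) := by
        refine le_trans (le_trans hq ?_) hsup
        exact_mod_cast le_abs_self _ |>.trans (le_of_eq (Int.abs_eq_natAbs _))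
      -- now bound |i - j|
      have hi := md_add_qd (n := n) i
      have hj := md_add_qd (n := n) j
      have hmi := Iev_mem_iff.mp (md_mem hn0 i)
      have hmj := Iev_mem_iff.mp (md_mem hn0 j)
      have e1 : i - j = (md n i - md n j) + (qd n i - qd n j) * (2*(n:ℤ)) := by
        linear_combination hj - hi
      have habs : |i - j| ≤ |md n i - md n j| + |(qd n i - qd n j) * (2*(n:ℤ))| := by
        rw [e1]; exact abs_add_le _ _
      have habs2 : |(qd n i - qd n j) * (2*(n:ℤ))| = |qd n i - qd n j| * (2*n) := by
        rw [abs_mul, abs_of_nonneg (by positivity : (0:ℤ) ≤ 2*n)]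
      have hmul : |qd n i - qd n j| * (2*(n:ℤ)) ≤ (N0:ℤ) * (2*n) :=
        mul_le_mul_of_nonneg_right hle (by positivity)
      have hmd : |md n i - md n j| ≤ 2*(n:ℤ) - 1 := abs_le.mpr ⟨by omega, by omega⟩
      have hexp : (2*(n:ℤ))*((N0:ℤ)+1) = (N0:ℤ) * (2*n) + 2*n := by ring
      linarith
    · -- tauD
      funext i j
      show bar (X (-1 - j) (-1 - i)) = -(X i j)
      have hi := md_add_qd (n := n) i
      have hj := md_add_qd (n := n) j
      have e1 := md_eq hn0 (Iev_neg (md_mem hn0 j))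
        (show (-(md n j) - 1) + (-(qd n j)) * (2*(n:ℤ)) = -1 - j by linear_combination -hj)
      have e2 := md_eq hn0 (Iev_neg (md_mem hn0 i))
        (show (-(md n i) - 1) + (-(qd n i)) * (2*(n:ℤ)) = -1 - i by linear_combination -hi)
      have hc := hcond ⟨-(md n i) - 1, Iev_neg (md_mem hn0 i)⟩ ⟨md n j, md_mem hn0 j⟩
        (qd n i) (qd n j)
      -- rewrite hc's second term index
      rw [show (⟨-(-(md n i) - 1) - 1, Iev_neg (Iev_neg (md_mem hn0 i))⟩ : {i : ℤ // i ∈ Iev n}) =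
            ⟨md n i, md_mem hn0 i⟩ from Subtype.ext (by ring)] at hc
      show bar (X (-1 - j) (-1 - i)) = -(A ⟨md n i, md_mem hn0 i⟩ ⟨md n j, md_mem hn0 j⟩
        (qd n i) (qd n j))
      have hX1 : X (-1 - j) (-1 - i) =
          A ⟨-(md n j) - 1, Iev_neg (md_mem hn0 j)⟩ ⟨-(md n i) - 1, Iev_neg (md_mem hn0 i)⟩
            (-(qd n j)) (-(qd n i)) := by
        show A ⟨md n (-1 - j), md_mem hn0 _⟩ ⟨md n (-1 - i), md_mem hn0 _⟩
            (qd n (-1 - j)) (qd n (-1 - i)) = _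
        rw [show (⟨md n (-1 - j), md_mem hn0 _⟩ : {i : ℤ // i ∈ Iev n}) =
              ⟨-(md n j) - 1, Iev_neg (md_mem hn0 j)⟩ from Subtype.ext e1.1,
            show (⟨md n (-1 - i), md_mem hn0 _⟩ : {i : ℤ // i ∈ Iev n}) =
              ⟨-(md n i) - 1, Iev_neg (md_mem hn0 i)⟩ from Subtype.ext e2.1, e1.2, e2.2]
      rw [hX1]
      exact eq_neg_of_add_eq_zero_left hc
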